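/- For 0 < δ < 1 and ν = (1-√δ)/(1+√δ), the graph r = χ⁺(θ) = θ - h_ν(θ) over θ ∈ (-1/2, 1/2) is invariant under the Suris map f_δ, and on this graph f_δ conjugates to h_{1/ν}; explicitly, f_δ(θ, χ⁺(θ)) = (h_{1/ν}(θ), χ⁺(h_{1/ν}(θ))). -/

import Mathlib

open Real
set_option maxHeartbeats 1000000

noncomputable def h (ν θ : ℝ) : ℝ :=
  (2 / π) * arctan (((ν + 1) * tan (π * θ / 2) + (ν - 1)) /
    ((ν - 1) * tan (π * θ / 2) + (ν + 1)))

noncomputable def Vd' (δ θ : ℝ) : ℝ :=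
  -(2 / π) * arctan (δ * sin (2 * π * θ) / (1 + δ * cos (2 * π * θ)))

noncomputable def suris (δ : ℝ) (p : ℝ × ℝ) : ℝ × ℝ :=
  (p.1 + p.2 + Vd' δ p.1, p.2 + Vd' δ p.1)

lemma step1 (ν t : ℝ) (hν0 : 0 < ν) (hν1 : ν < 1) (ht : -1 < t) (ht1 : t < 1) :
    arctan (((ν+1)*t+(ν-1))/((ν-1)*t+(ν+1))) + arctan (((1+ν)*t+(1-ν))/((1-ν)*t+(1+ν)))
      = arctan (4*ν*t/((1+ν^2)*(1-t^2))) := by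
  have hd1 : 0 < (ν-1)*t+(ν+1) := by nlinarith
  have hd2 : 0 < (1-ν)*t+(1+ν) := by nlinarith
  have hab : (((ν+1)*t+(ν-1))/((ν-1)*t+(ν+1))) * (((1+ν)*t+(1-ν))/((1-ν)*t+(1+ν))) < 1 := by
    rw [div_mul_div_comm, div_lt_one (by positivity)]
    nlinarith [mul_pos (mul_pos (by linarith : (0:ℝ)<1-t) (by linarith : (0:ℝ)<1+t)) (by positivity : (0:ℝ) < (1+ν)^2+(1-ν)^2)]
  rw [arctan_add hab]
  congr 1
  have h1 : (0:ℝ) < 1 - t^2 := by nlinarith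
  have hden : (0:ℝ) < (1+ν^2)*(1-t^2) := by positivity
  rw [div_eq_div_iff (by linarith : (0:ℝ) < 1 - _*_).ne' hden.ne']
  field_simp [(show 0 < t*(ν-1)+(ν+1) by linarith).ne', (show 0 < t*(1-ν)+(1+ν) by linarith).ne']
  ring

lemma step2 (t : ℝ) (ht : -1 < t) (ht1 : t < 1) :
    2 * arctan t = arctan (2*t/(1-t^2)) := by
  have h : t * t < 1 := by nlinarith
  rw [two_mul, arctan_add h]
  congr 1
  ring_nf

lemma step3 (ν δ t : ℝ) (hν0 : 0 < ν) (hν1 : ν < 1) (hδ0 : 0 < δ) (hδ1 : δ < 1)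
    (hrel : δ * (1+ν)^2 = (1-ν)^2) (ht : -1 < t) (ht1 : t < 1) :
    arctan (2*t/(1-t^2)) - arctan (4*δ*t*(1-t^2)/((1+t^2)^2 + δ*((1-t^2)^2 - 4*t^2)))
      = arctan (4*ν*t/((1+ν^2)*(1-t^2))) := by
  have h1 : (0:ℝ) < 1 - t^2 := by nlinarith
  set E : ℝ := (1+t^2)^2 + δ*((1-t^2)^2 - 4*t^2) with hEdef
  have hE : (0:ℝ) < E := by
    rw [hEdef]; nlinarith [sq_nonneg (1-t^2), sq_nonneg (1+t^2), sq_nonneg t]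
  have hnum : (0:ℝ) ≤ 2*t*(4*δ*t*(1-t^2)) := by
    have : (0:ℝ) ≤ δ * t^2 * (1-t^2) := by positivity
    nlinarith
  have hprod : (2*t/(1-t^2)) * (-(4*δ*t*(1-t^2)/E)) < 1 := by
    have h0 : (0:ℝ) ≤ (2*t/(1-t^2)) * (4*δ*t*(1-t^2)/E) := by
      rw [div_mul_div_comm]
      exact div_nonneg hnum (by positivity)
    nlinarith
  rw [sub_eq_add_neg, ← arctan_neg, arctan_add hprod]
  congr 1
  have hA : 2*t/(1-t^2) + -(4*δ*t*(1-t^2)/E)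
      = (2*t*(1-δ)*(1+t^2)^2)/((1-t^2)*E) := by
    rw [← neg_div, div_add_div _ _ h1.ne' hE.ne']
    congr 1
    rw [hEdef]; ring
  have hB : 1 - (2*t/(1-t^2)) * (-(4*δ*t*(1-t^2)/E))
      = ((1-t^2)*((1+δ)*(1+t^2)^2))/((1-t^2)*E) := by
    rw [mul_neg, sub_neg_eq_add, div_mul_div_comm]
    rw [eq_div_iff (by positivity : (1-t^2)*E ≠ 0)]
    rw [add_mul, div_mul_cancel₀ _ (by positivity : (1-t^2)*E ≠ 0)]
    rw [hEdef]; ring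
  rw [hA, hB, div_div_div_cancel_right₀ (by positivity : ((1:ℝ)-t^2)*E ≠ 0)]
  rw [div_eq_div_iff (by positivity) (by positivity : (0:ℝ) < (1+ν^2)*(1-t^2)).ne']
  linear_combination (-(2*t)*(1-t^2)*(1+t^2)^2) * hrel

theorem chi_plus_invariant (δ : ℝ) (hδ : 0 < δ) (hδ1 : δ < 1)
    (θ : ℝ) (hθ : θ ∈ Set.Ioo (-(1:ℝ)/2) (1/2)) :
    suris δ (θ, θ - h ((1 - Real.sqrt δ) / (1 + Real.sqrt δ)) θ) =
      (h (1 / ((1 - Real.sqrt δ) / (1 + Real.sqrt δ))) θ,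
       h (1 / ((1 - Real.sqrt δ) / (1 + Real.sqrt δ))) θ
         - h ((1 - Real.sqrt δ) / (1 + Real.sqrt δ))
             (h (1 / ((1 - Real.sqrt δ) / (1 + Real.sqrt δ))) θ)) := by
  obtain ⟨hθ1, hθ2⟩ := hθ
  have hπ := pi_pos
  set s := Real.sqrt δ with hs
  have hs0 : 0 < s := Real.sqrt_pos.2 hδ
  have hs1 : s < 1 := by
    have : s < Real.sqrt 1 := Real.sqrt_lt_sqrt hδ.le hδ1
    simpa using this
  set ν := (1-s)/(1+s) with hν
  have hs1' : (0:ℝ) < 1 + s := by linarith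
  have hν0 : 0 < ν := div_pos (by linarith) hs1'
  have hν1 : ν < 1 := by rw [hν, div_lt_one hs1']; linarith
  have hsq : s^2 = δ := Real.sq_sqrt hδ.le
  have hrel : δ * (1+ν)^2 = (1-ν)^2 := by
    rw [hν]
    field_simp
    nlinarith [hsq]
  -- the angle
  set x := π*θ/2 with hx
  have hx1 : -(π/4) < x := by rw [hx]; nlinarith
  have hx2 : x < π/4 := by rw [hx]; nlinarith
  have hxlo : -(π/2) < x := by linarith
  have hxhi : x < π/2 := by linarith
  set t := tan x with htdef
  have harct : arctan t = x := arctan_tan hxlo hxhi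
  have ht1 : t < 1 := by
    rw [htdef, ← tan_pi_div_four]
    exact tan_lt_tan_of_lt_of_lt_pi_div_two hxlo (by linarith) hx2
  have ht0 : -1 < t := by
    rw [htdef, show (-1:ℝ) = tan (-(π/4)) by rw [tan_neg, tan_pi_div_four]]
    exact tan_lt_tan_of_lt_of_lt_pi_div_two (by linarith) hxhi hx1
  have h1t : (0:ℝ) < 1 - t^2 := by nlinarith
  -- trig values
  have hcx : 0 < cos x := cos_pos_of_mem_Ioo ⟨hxlo, hxhi⟩
  have hsin : sin x = t * cos x := by
    rw [htdef, tan_eq_sin_div_cos, div_mul_cancel₀ _ hcx.ne']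
  have hc2 : cos x ^ 2 = 1/(1+t^2) := by
    have hp := sin_sq_add_cos_sq x
    rw [hsin] at hp
    rw [eq_div_iff (by positivity : (1:ℝ)+t^2 ≠ 0)]
    nlinarith [hp]
  have h2x : 2*π*θ = 2*(2*x) := by rw [hx]; ring
  have hsin2 : sin (2*π*θ) = 4*t*(1-t^2)/(1+t^2)^2 := by
    rw [h2x, sin_two_mul, sin_two_mul, cos_two_mul, hsin]
    rw [show 2*(2*(t*cos x)*cos x)*(2*cos x^2-1) = 4*t*(cos x^2)*(2*(cos x^2)-1) by ring, hc2]
    field_simp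
    ring
  have hcos2 : cos (2*π*θ) = ((1-t^2)^2 - 4*t^2)/(1+t^2)^2 := by
    rw [h2x, cos_two_mul, cos_two_mul]
    rw [show 2*(2*cos x^2-1)^2 - 1 = 2*(2*(cos x^2)-1)^2 - 1 by ring, hc2]
    field_simp
    ring
  set E : ℝ := (1+t^2)^2 + δ*((1-t^2)^2 - 4*t^2) with hEdef
  have hE : (0:ℝ) < E := by
    rw [hEdef]; nlinarith [sq_nonneg (1-t^2), sq_nonneg (1+t^2), sq_nonneg t]
  have harg : δ * sin (2*π*θ) / (1 + δ * cos (2*π*θ)) = 4*δ*t*(1-t^2)/E := by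
    rw [hsin2, hcos2]
    have hden : 1 + δ * (((1-t^2)^2-4*t^2)/(1+t^2)^2) = E/(1+t^2)^2 := by
      rw [hEdef]; field_simp
    rw [hden, mul_div_assoc']
    rw [div_div_div_cancel_right₀ (by positivity : ((1:ℝ)+t^2)^2 ≠ 0)]
    rw [show δ*(4*t*(1-t^2)) = 4*δ*t*(1-t^2) by ring]
  -- h values
  have hθeq : θ = (2/π) * arctan t := by
    rw [harct, hx]; field_simp
  set a : ℝ := ((ν+1)*t+(ν-1))/((ν-1)*t+(ν+1)) with hadef
  set b : ℝ := ((1+ν)*t+(1-ν))/((1-ν)*t+(1+ν)) with hbdef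
  have hd2 : 0 < (1-ν)*t+(1+ν) := by nlinarith
  have hhν : h ν θ = (2/π) * arctan a := by rw [h, ← hx, ← htdef, hadef]
  have hb : h (1/ν) θ = (2/π) * arctan b := by
    rw [h, ← hx, ← htdef, hbdef]
    congr 2
    have hd2' : (1/ν-1)*t+(1/ν+1) = ((1-ν)*t+(1+ν))/ν := by
      field_simp
    rw [div_eq_div_iff (by rw [hd2']; positivity) hd2.ne']
    field_simp
  -- fixed ratio : M_ν b = t
  have hdenb : (ν-1)*b+(ν+1) = 4*ν/((1-ν)*t+(1+ν)) := by
    rw [hbdef]; field_simp [(show 0 < t*(1-ν)+(1+ν) by linarith).ne']; ring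
  have hdenb' : (ν-1)*b+(ν+1) ≠ 0 := by rw [hdenb]; positivity
  have hMb : ((ν+1)*b+(ν-1))/((ν-1)*b+(ν+1)) = t := by
    rw [div_eq_iff hdenb', hbdef]
    field_simp [(show 0 < t*(1-ν)+(1+ν) by linarith).ne']
    ring
  have htanφ : tan (π * (h (1/ν) θ) / 2) = b := by
    rw [hb, show π * ((2/π) * arctan b)/2 = arctan b by field_simp, tan_arctan]
  have hfix : h ν (h (1/ν) θ) = θ := by
    rw [h, htanφ, hMb, harct, hx]
    field_simp
  -- the key arctan identity
  have key : arctan a + arctan b = 2*arctan t - arctan (4*δ*t*(1-t^2)/E) := by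
    rw [hadef, hbdef, step1 ν t hν0 hν1 ht0 ht1, hEdef,
      ← step3 ν δ t hν0 hν1 hδ hδ1 hrel ht0 ht1, ← step2 t ht0 ht1]
  have hVd : Vd' δ θ = -(2/π) * arctan (4*δ*t*(1-t^2)/E) := by
    rw [Vd', harg]
  -- assemble
  rw [suris, Prod.mk.injEq]
  constructor
  · simp only
    rw [hhν, hVd, hb, hθeq]
    linear_combination (-(2/π)) * key
  · simp only
    rw [hfix, hhν, hVd, hb, hθeq]
    linear_combination (-(2/π)) * key
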